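/- If W^{(0)} = 0, 0 < η ≤ 1/λ̂_1, and W^{(t)} = W^{(t-1)} - (η/n) Fᵀ (F W^{(t-1)} - Y) for all t ≥ 1, then for every t ≥ 0 the training residual satisfies ‖F W^{(t)} - Y‖_F ≤ ‖Y - Ȳ‖_F + (1 - η λ̂_r)^t ‖Y‖_F. -/

import Mathlib

open Matrix Finset

/-- The Frobenius norm of a real matrix. -/
noncomputable def frobNorm {m k : Type*} [Fintype m] [Fintype k] (A : Matrix m k ℝ) : ℝ :=
  Real.sqrt (∑ i, ∑ j, (A i j) ^ 2)

/-- `U^r (U^r)ᵀ`, where `U^r` consists of the first `r` columns of `U`; i.e. the projection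
matrix onto the span of the first `r` columns of `U`. -/
noncomputable def topColsProj {n d : ℕ} (U : Matrix (Fin n) (Fin d) ℝ) (r : ℕ) :
    Matrix (Fin n) (Fin n) ℝ :=
  Matrix.of fun i j => ∑ k : Fin d, if (k : ℕ) < r then U i k * U j k else 0

namespace TRB

variable {m k : Type*} [Fintype m] [Fintype k]

noncomputable def frobInner (A B : Matrix m k ℝ) : ℝ := ∑ i, ∑ j, A i j * B i j

noncomputable def toE (A : Matrix m k ℝ) : EuclideanSpace ℝ (m × k) :=
  WithLp.toLp 2 (fun p : m × k => A p.1 p.2)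

lemma toE_norm (A : Matrix m k ℝ) : ‖toE A‖ = frobNorm A := by
  rw [EuclideanSpace.norm_eq, frobNorm]
  congr 1
  rw [Fintype.sum_prod_type]
  exact Finset.sum_congr rfl fun i _ => Finset.sum_congr rfl fun j _ => by
    simp [toE, Real.norm_eq_abs, sq_abs]

lemma toE_inner (A B : Matrix m k ℝ) : (inner ℝ (toE A) (toE B) : ℝ) = frobInner A B := by
  rw [PiLp.inner_apply, frobInner]
  rw [Fintype.sum_prod_type]
  exact Finset.sum_congr rfl fun i _ => Finset.sum_congr rfl fun j _ => by
    simp [toE, RCLike.inner_apply, mul_comm]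

omit [Fintype m] [Fintype k] in
lemma toE_add (A B : Matrix m k ℝ) : toE (A + B) = toE A + toE B := by
  simp only [toE, ← WithLp.toLp_add]; rfl

omit [Fintype m] [Fintype k] in
lemma toE_neg (A : Matrix m k ℝ) : toE (-A) = - toE A := by
  simp only [toE, ← WithLp.toLp_neg]; rfl

lemma frobNorm_nonneg (A : Matrix m k ℝ) : 0 ≤ frobNorm A := Real.sqrt_nonneg _

lemma frobNorm_neg (A : Matrix m k ℝ) : frobNorm (-A) = frobNorm A := by
  rw [← toE_norm, ← toE_norm, toE_neg, norm_neg]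

lemma frobNorm_add_le (A B : Matrix m k ℝ) :
    frobNorm (A + B) ≤ frobNorm A + frobNorm B := by
  rw [← toE_norm, ← toE_norm, ← toE_norm, toE_add]
  exact norm_add_le _ _

lemma frobInner_le (A B : Matrix m k ℝ) : frobInner A B ≤ frobNorm A * frobNorm B := by
  rw [← toE_norm, ← toE_norm, ← toE_inner]
  exact real_inner_le_norm _ _

lemma frobInner_self (A : Matrix m k ℝ) : frobInner A A = frobNorm A ^ 2 := by
  rw [← toE_norm, ← toE_inner, real_inner_self_eq_norm_sq]

lemma frobInner_eq_trace {l : Type*} [Fintype l] (A B : Matrix m k ℝ) :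
    frobInner A B = (Aᵀ * B).trace := by
  rw [frobInner, Matrix.trace]
  rw [Finset.sum_comm]
  exact Finset.sum_congr rfl fun j _ => by simp [Matrix.mul_apply, Matrix.diag]

end TRB

namespace TRB2
open TRB

variable {n d C : ℕ}

lemma frobInner_mul_left (U : Matrix (Fin n) (Fin d) ℝ) (hU : Uᵀ * U = 1)
    (M N : Matrix (Fin d) (Fin C) ℝ) :
    frobInner (U * M) (U * N) = frobInner M N := by
  rw [frobInner_eq_trace (l := Fin n), frobInner_eq_trace (l := Fin n)]
  rw [Matrix.transpose_mul, Matrix.mul_assoc, ← Matrix.mul_assoc Uᵀ U N, hU, Matrix.one_mul]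

lemma frobNorm_mul_left (U : Matrix (Fin n) (Fin d) ℝ) (hU : Uᵀ * U = 1)
    (M : Matrix (Fin d) (Fin C) ℝ) :
    frobNorm (U * M) = frobNorm M := by
  have h := frobInner_mul_left U hU M M
  rw [frobInner_self, frobInner_self] at h
  have h1 := frobNorm_nonneg (U * M)
  have h2 := frobNorm_nonneg M
  nlinarith

lemma frobNorm_proj_le (P : Matrix (Fin n) (Fin n) ℝ) (hP : Pᵀ * P = P)
    (Y : Matrix (Fin n) (Fin C) ℝ) :
    frobNorm (P * Y) ≤ frobNorm Y := by
  have h1 : frobInner (P * Y) (P * Y) = frobInner Y (P * Y) := by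
    rw [frobInner_eq_trace (l := Fin n), frobInner_eq_trace (l := Fin n)]
    rw [Matrix.transpose_mul, Matrix.mul_assoc, ← Matrix.mul_assoc Pᵀ P Y, hP]
  have h2 := frobInner_le Y (P * Y)
  rw [frobInner_self] at h1
  have h3 := frobNorm_nonneg (P * Y)
  have h4 := frobNorm_nonneg Y
  nlinarith

lemma frobNorm_entrywise_le {m k : Type*} [Fintype m] [Fintype k]
    (A B : Matrix m k ℝ) (b : ℝ) (hb : 0 ≤ b)
    (h : ∀ i j, |A i j| ≤ b * |B i j|) :
    frobNorm A ≤ b * frobNorm B := by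
  rw [frobNorm, frobNorm, ← Real.sqrt_sq hb, ← Real.sqrt_mul (sq_nonneg b)]
  apply Real.sqrt_le_sqrt
  rw [Finset.mul_sum]
  refine Finset.sum_le_sum fun i _ => ?_
  rw [Finset.mul_sum]
  refine Finset.sum_le_sum fun j _ => ?_
  have := h i j
  have h1 : A i j ^ 2 ≤ (b * |B i j|) ^ 2 := by
    rw [← sq_abs (A i j)]
    exact pow_le_pow_left₀ (abs_nonneg _) this 2
  calc A i j ^ 2 ≤ (b * |B i j|) ^ 2 := h1
    _ = b ^ 2 * B i j ^ 2 := by rw [mul_pow, sq_abs]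

end TRB2

/-- if `W⁽⁰⁾ = 0`, `0 < η ≤ 1/λ̂₁`, and
`W⁽ᵗ⁾ = W⁽ᵗ⁻¹⁾ - (η/n) Fᵀ (F W⁽ᵗ⁻¹⁾ - Y)` for all `t ≥ 1`, then for every `t ≥ 0`,
`‖F W⁽ᵗ⁾ - Y‖_F ≤ ‖Y - Ȳ‖_F + (1 - η λ̂_r)ᵗ ‖Y‖_F`, where `Ȳ = U^r (U^r)ᵀ Y`, and
`λ̂₁ = σ(0)²/n`, `λ̂_r = σ(r-1)²/n` (0-indexed `σ`) are the largest and smallest positive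
eigenvalues of `K_n = (1/n) F Fᵀ`. -/
theorem training_residual_bound {n d C : ℕ} (hn : 0 < n)
    (F U : Matrix (Fin n) (Fin d) ℝ) (V : Matrix (Fin d) (Fin d) ℝ)
    (σ : ℕ → ℝ) (r : ℕ) (Y : Matrix (Fin n) (Fin C) ℝ)
    (hSVD : F = U * Matrix.diagonal (fun j : Fin d => σ (j : ℕ)) * Vᵀ)
    (hU : Uᵀ * U = 1)
    (hV1 : Vᵀ * V = 1) (hV2 : V * Vᵀ = 1)
    (hmono : ∀ i j : ℕ, i ≤ j → σ j ≤ σ i)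
    (hnonneg : ∀ i : ℕ, 0 ≤ σ i)
    (hr1 : 1 ≤ r) (hr : r ≤ min n d) (hrank : F.rank = r)
    (hpos : ∀ i : ℕ, i < r → 0 < σ i) (hzero : ∀ i : ℕ, r ≤ i → σ i = 0)
    (η : ℝ) (hη0 : 0 < η) (hη1 : η ≤ 1 / (σ 0 ^ 2 / (n : ℝ)))
    (W : ℕ → Matrix (Fin d) (Fin C) ℝ)
    (hW0 : W 0 = 0)
    (hrec : ∀ t : ℕ, W (t + 1) = W t - (η / (n : ℝ)) • (Fᵀ * (F * W t - Y))) :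
    ∀ t : ℕ,
      frobNorm (F * W t - Y) ≤
        frobNorm (Y - topColsProj U r * Y) +
          (1 - η * (σ (r - 1) ^ 2 / (n : ℝ))) ^ t * frobNorm Y := by
  intro t
  have hn' : (0:ℝ) < (n:ℝ) := by exact_mod_cast hn
  set Z : Matrix (Fin d) (Fin C) ℝ := Uᵀ * Y with hZ
  set β : ℝ := 1 - η * (σ (r - 1) ^ 2 / (n : ℝ)) with hβ
  set e : Fin d → ℝ := fun k => if (k : ℕ) < r then (1:ℝ) else 0 with he
  set g : Fin d → ℝ :=
    fun k => if (k : ℕ) < r then (1 - η * (σ (k:ℕ) ^ 2 / (n : ℝ))) ^ t else 0 with hg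
  -- F * Fᵀ
  have hFF : F * Fᵀ = U * (Matrix.diagonal (fun k : Fin d => σ (k:ℕ) ^ 2) * Uᵀ) := by
    rw [hSVD]
    simp only [Matrix.transpose_mul, Matrix.transpose_transpose, Matrix.diagonal_transpose,
      Matrix.mul_assoc]
    rw [← Matrix.mul_assoc Vᵀ V, hV1, Matrix.one_mul,
      ← Matrix.mul_assoc (Matrix.diagonal _) (Matrix.diagonal _) Uᵀ,
      Matrix.diagonal_mul_diagonal]
    simp only [pow_two]
  have hconjY : ∀ a : Fin d → ℝ,
      (U * (Matrix.diagonal a * Uᵀ)) * Y = U * (Matrix.diagonal a * Z) := by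
    intro a
    rw [Matrix.mul_assoc, Matrix.mul_assoc, hZ]
  have hconj : ∀ (a b : Fin d → ℝ),
      (U * (Matrix.diagonal a * Uᵀ)) * (U * (Matrix.diagonal b * Z)) =
        U * (Matrix.diagonal (fun k => a k * b k) * Z) := by
    intro a b
    rw [Matrix.mul_assoc, Matrix.mul_assoc (Matrix.diagonal a) Uᵀ _,
      ← Matrix.mul_assoc Uᵀ U _, hU, Matrix.one_mul,
      ← Matrix.mul_assoc (Matrix.diagonal a) (Matrix.diagonal b) Z,
      Matrix.diagonal_mul_diagonal]
  have happ : ∀ (f : Fin d → ℝ) (i : Fin n) (j : Fin C),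
      (U * (Matrix.diagonal f * Z)) i j = ∑ k, U i k * (f k * Z k j) := by
    intro f i j
    rw [Matrix.mul_apply]
    exact Finset.sum_congr rfl fun k _ => by rw [Matrix.diagonal_mul]
  have hsub : ∀ (a b : Fin d → ℝ),
      U * (Matrix.diagonal a * Z) - U * (Matrix.diagonal b * Z) =
        U * (Matrix.diagonal (fun k => a k - b k) * Z) := by
    intro a b
    ext i j
    simp only [Matrix.sub_apply, happ]
    rw [← Finset.sum_sub_distrib]
    exact Finset.sum_congr rfl fun k _ => by ring
  have hstep2 : ∀ (a p : Fin d → ℝ),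
      (U * (Matrix.diagonal a * Z) - Y) -
          (η/(n:ℝ)) • (U * (Matrix.diagonal p * Z) -
            U * (Matrix.diagonal (fun k : Fin d => σ (k:ℕ) ^ 2) * Z)) =
        U * (Matrix.diagonal
          (fun k : Fin d => a k - η/(n:ℝ) * (p k - σ (k:ℕ) ^ 2)) * Z) - Y := by
    intro a p
    ext i j
    simp only [Matrix.sub_apply, Matrix.smul_apply, happ, smul_eq_mul]
    have hterm : ∀ k : Fin d, U i k * ((a k - η/(n:ℝ) * (p k - σ (k:ℕ)^2)) * Z k j) =
        U i k * (a k * Z k j) -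
          η/(n:ℝ) * (U i k * (p k * Z k j) - U i k * (σ (k:ℕ)^2 * Z k j)) := fun k => by ring
    rw [Finset.sum_congr rfl (fun k _ => hterm k), Finset.sum_sub_distrib, ← Finset.mul_sum,
      Finset.sum_sub_distrib]
    ring
  -- closed form
  have hcf : ∀ s : ℕ, F * W s - Y =
      U * (Matrix.diagonal
        (fun k : Fin d => 1 - (1 - η * (σ (k:ℕ) ^ 2 / (n:ℝ))) ^ s) * Z) - Y := by
    intro s
    induction s with
    | zero =>
      simp [hW0, Matrix.mul_zero]
    | succ s ih =>
      have hstep : F * W (s+1) - Y =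
          (F * W s - Y) - (η/(n:ℝ)) • ((F * Fᵀ) * (F * W s - Y)) := by
        rw [hrec s, Matrix.mul_sub, Matrix.mul_smul, ← Matrix.mul_assoc]
        abel
      rw [hstep, ih, hFF, Matrix.mul_sub, hconj, hconjY, hstep2]
      have hfun : (fun k : Fin d =>
          (1 - (1 - η * (σ (k:ℕ)^2/(n:ℝ)))^s) -
            η/(n:ℝ) * (σ (k:ℕ)^2 * (1 - (1 - η * (σ (k:ℕ)^2/(n:ℝ)))^s) - σ (k:ℕ)^2)) =
          (fun k : Fin d => 1 - (1 - η * (σ (k:ℕ)^2/(n:ℝ)))^(s+1)) := by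
        funext k
        rw [pow_succ]
        ring
      rw [hfun]
  -- topColsProj
  have hPdef : topColsProj U r = U * (Matrix.diagonal e * Uᵀ) := by
    ext i j
    rw [Matrix.mul_apply]
    simp only [topColsProj, Matrix.of_apply]
    refine Finset.sum_congr rfl fun k _ => ?_
    rw [Matrix.diagonal_mul, Matrix.transpose_apply, he]
    by_cases hk : (k:ℕ) < r <;> simp [hk]
  have hPY : topColsProj U r * Y = U * (Matrix.diagonal e * Z) := by
    rw [hPdef, hconjY]
  have hP : (topColsProj U r)ᵀ * topColsProj U r = topColsProj U r := by
    rw [hPdef]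
    rw [Matrix.transpose_mul, Matrix.transpose_mul, Matrix.transpose_transpose,
      Matrix.diagonal_transpose]
    rw [Matrix.mul_assoc (U * Matrix.diagonal e) Uᵀ _, ← Matrix.mul_assoc Uᵀ U _, hU,
      Matrix.one_mul, Matrix.mul_assoc U (Matrix.diagonal e) _,
      ← Matrix.mul_assoc (Matrix.diagonal e) (Matrix.diagonal e) Uᵀ,
      Matrix.diagonal_mul_diagonal]
    rw [show (fun k : Fin d => e k * e k) = e from
      funext fun k => by by_cases hk : (k:ℕ) < r <;> simp [he, hk]]
  -- key decomposition
  have hkey : F * W t - Y =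
      -((Y - topColsProj U r * Y) + U * (Matrix.diagonal g * Z)) := by
    rw [hcf t, hPY]
    have h1 : -((Y - U * (Matrix.diagonal e * Z)) + U * (Matrix.diagonal g * Z)) =
        (U * (Matrix.diagonal e * Z) - U * (Matrix.diagonal g * Z)) - Y := by abel
    rw [h1, hsub]
    have hfun2 : (fun k : Fin d => e k - g k) =
        (fun k : Fin d => 1 - (1 - η * (σ (k:ℕ)^2/(n:ℝ)))^t) := by
      funext k
      simp only [he, hg]
      by_cases hk : (k:ℕ) < r
      · simp [hk]
      · have h0 : σ (k:ℕ) = 0 := hzero _ (le_of_not_gt hk)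
        simp [hk, h0]
    rw [hfun2]
  -- numeric bounds
  have hσ0 : 0 < σ 0 := hpos 0 hr1
  have hlam0 : 0 < σ 0 ^ 2 / (n:ℝ) := by positivity
  have hη1' : η * (σ 0 ^ 2 / (n:ℝ)) ≤ 1 := by
    have := (le_div_iff₀ hlam0).mp hη1
    linarith
  have hβ0 : 0 ≤ β := by
    have h1 : σ (r-1) ≤ σ 0 := hmono 0 (r-1) (Nat.zero_le _)
    have h2 : 0 ≤ σ (r-1) := hnonneg _
    have h4 : η * (σ (r-1) ^ 2 / (n:ℝ)) ≤ η * (σ 0 ^ 2 / (n:ℝ)) := by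
      gcongr <;> first | exact hη0.le | nlinarith
    rw [hβ]; linarith
  have hβt : 0 ≤ β ^ t := pow_nonneg hβ0 t
  -- entrywise bound
  have hentry : ∀ (i : Fin d) (j : Fin C),
      |(Matrix.diagonal g * Z) i j| ≤ β ^ t * |(Matrix.diagonal e * Z) i j| := by
    intro i j
    rw [Matrix.diagonal_mul, Matrix.diagonal_mul, abs_mul, abs_mul]
    by_cases hk : (i:ℕ) < r
    · have h0 : 0 ≤ 1 - η * (σ (i:ℕ) ^ 2 / (n:ℝ)) := by
        have h1 : σ (i:ℕ) ≤ σ 0 := hmono 0 (i:ℕ) (Nat.zero_le _)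
        have h2 : 0 ≤ σ (i:ℕ) := hnonneg _
        have h3 : η * (σ (i:ℕ) ^ 2 / (n:ℝ)) ≤ η * (σ 0 ^ 2 / (n:ℝ)) := by
          gcongr <;> first | exact hη0.le | nlinarith
        linarith
      have hle : 1 - η * (σ (i:ℕ) ^ 2 / (n:ℝ)) ≤ β := by
        have h1 : σ (r-1) ≤ σ (i:ℕ) := by
          apply hmono _ _ (by omega)
        have h2 : 0 ≤ σ (r-1) := hnonneg _
        have h3 : η * (σ (r-1) ^ 2 / (n:ℝ)) ≤ η * (σ (i:ℕ) ^ 2 / (n:ℝ)) := by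
          gcongr <;> first | exact hη0.le | nlinarith
        rw [hβ]; linarith
      have : |g i| ≤ β ^ t := by
        rw [hg]
        simp only [hk, if_true]
        rw [abs_of_nonneg (pow_nonneg h0 t)]
        exact pow_le_pow_left₀ h0 hle t
      have he1 : |e i| = 1 := by simp [he, hk]
      rw [he1]
      calc |g i| * |Z i j| ≤ β ^ t * |Z i j| :=
            mul_le_mul_of_nonneg_right this (abs_nonneg _)
        _ = β ^ t * (1 * |Z i j|) := by ring
    · have : g i = 0 := by simp [hg, hk]
      simp [this]
      positivity
  -- assemble
  calc frobNorm (F * W t - Y)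
      = frobNorm ((Y - topColsProj U r * Y) + U * (Matrix.diagonal g * Z)) := by
        rw [hkey, TRB.frobNorm_neg]
    _ ≤ frobNorm (Y - topColsProj U r * Y) + frobNorm (U * (Matrix.diagonal g * Z)) :=
        TRB.frobNorm_add_le _ _
    _ ≤ frobNorm (Y - topColsProj U r * Y) + β ^ t * frobNorm Y := by
        have h1 : frobNorm (U * (Matrix.diagonal g * Z)) = frobNorm (Matrix.diagonal g * Z) :=
          TRB2.frobNorm_mul_left U hU _
        have h2 : frobNorm (Matrix.diagonal g * Z) ≤ β ^ t * frobNorm (Matrix.diagonal e * Z) :=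
          TRB2.frobNorm_entrywise_le _ _ _ hβt hentry
        have h3 : frobNorm (Matrix.diagonal e * Z) = frobNorm (topColsProj U r * Y) := by
          rw [hPY, TRB2.frobNorm_mul_left U hU]
        have h4 : frobNorm (topColsProj U r * Y) ≤ frobNorm Y :=
          TRB2.frobNorm_proj_le _ hP Y
        have h5 : frobNorm (U * (Matrix.diagonal g * Z)) ≤ β ^ t * frobNorm Y := by
          rw [h1]
          calc frobNorm (Matrix.diagonal g * Z) ≤ β ^ t * frobNorm (Matrix.diagonal e * Z) := h2
            _ = β ^ t * frobNorm (topColsProj U r * Y) := by rw [h3]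
            _ ≤ β ^ t * frobNorm Y := mul_le_mul_of_nonneg_left h4 hβt
        linarith
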